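/- Let 𝒢 be a group (under matrix multiplication) of monomial unitary matrices in Matrix S S ℂ and let ψ be the unique common +1 eigenvector of 𝒢. Then: (a) all nonzero amplitudes of ψ are equal in modulus, i.e. for all s, t ∈ S with ψ(s) ≠ 0 and ψ(t) ≠ 0 one has |ψ(s)| = |ψ(t)|; and (b) for every s ∈ S with ψ(s) ≠ 0, the support {t ∈ S : ψ(t) ≠ 0} equals the orbit O_s. -/

import Mathlib

open Matrix

-- From a column relation, entrywise entries of the column.
lemma col_entry {S : Type*} [Fintype S] [DecidableEq S]
    (M : Matrix S S ℂ) (s t : S) (c : ℂ)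
    (hcol : M.mulVec (Pi.single s 1) = c • (Pi.single t 1 : S → ℂ)) (i : S) :
    M i s = c * (Pi.single t 1 : S → ℂ) i := by
  have := congrFun hcol i
  simpa [Matrix.mulVec_single] using this

-- the scalar of a monomial column of a unitary matrix has |c|² = 1
lemma key1 {S : Type*} [Fintype S] [DecidableEq S]
    (U : Matrix.unitaryGroup S ℂ) (s t : S) (c : ℂ)
    (hcol : (U : Matrix S S ℂ).mulVec (Pi.single s 1) = c • (Pi.single t 1 : S → ℂ)) :
    (starRingEnd ℂ) c * c = 1 := by
  have hU : (star (U : Matrix S S ℂ)) * (U : Matrix S S ℂ) = 1 :=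
    Matrix.UnitaryGroup.star_mul_self U
  have h1 : ((star (U : Matrix S S ℂ)) * (U : Matrix S S ℂ)) s s = 1 := by
    rw [hU]; simp
  rw [Matrix.mul_apply] at h1
  have hent := col_entry (U : Matrix S S ℂ) s t c hcol
  calc (starRingEnd ℂ) c * c
      = ∑ i, (star (U : Matrix S S ℂ)) s i * (U : Matrix S S ℂ) i s := by
        rw [Finset.sum_eq_single t]
        · simp [Matrix.star_apply, hent]
        · intro b _ hb
          simp [Matrix.star_apply, hent, Pi.single_apply, hb]
        · simp
    _ = 1 := h1

lemma key2 {S : Type*} [Fintype S] [DecidableEq S]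
    (U : Matrix.unitaryGroup S ℂ) (s t : S) (c : ℂ)
    (hcol : (U : Matrix S S ℂ).mulVec (Pi.single s 1) = c • (Pi.single t 1 : S → ℂ))
    (ψ : S → ℂ) (heig : (U : Matrix S S ℂ).mulVec ψ = ψ) :
    ψ t = c * ψ s := by
  have hcc := key1 U s t c hcol
  have hc : c ≠ 0 := by
    intro h; rw [h] at hcc; simp at hcc
  have hU : (star (U : Matrix S S ℂ)) * (U : Matrix S S ℂ) = 1 :=
    Matrix.UnitaryGroup.star_mul_self U
  -- column t of star U is c⁻¹ • single s 1
  have hcol' : (star (U : Matrix S S ℂ)).mulVec (Pi.single t 1)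
      = c⁻¹ • (Pi.single s 1 : S → ℂ) := by
    have h1 : (star (U : Matrix S S ℂ)).mulVec ((U : Matrix S S ℂ).mulVec (Pi.single s 1))
        = Pi.single s 1 := by
      rw [Matrix.mulVec_mulVec, hU, Matrix.one_mulVec]
    rw [hcol, Matrix.mulVec_smul] at h1
    calc (star (U : Matrix S S ℂ)).mulVec (Pi.single t 1)
        = c⁻¹ • (c • (star (U : Matrix S S ℂ)).mulVec (Pi.single t 1)) := by
          rw [smul_smul, inv_mul_cancel₀ hc, one_smul]
      _ = c⁻¹ • (Pi.single s 1 : S → ℂ) := by rw [h1]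
  -- row t of U
  have hrow : ∀ i, (U : Matrix S S ℂ) t i = (starRingEnd ℂ) c⁻¹ * (Pi.single s 1 : S → ℂ) i := by
    intro i
    have := col_entry (star (U : Matrix S S ℂ)) t s c⁻¹ hcol' i
    rw [Matrix.star_apply] at this
    have h2 : (U : Matrix S S ℂ) t i = (starRingEnd ℂ) (c⁻¹ * (Pi.single s 1 : S → ℂ) i) := by
      rw [← this]; simp
    rw [h2, _root_.map_mul]
    congr 1
    simp [Pi.single_apply, apply_ite]
  have hconj : (starRingEnd ℂ) c⁻¹ = c := by
    have : (starRingEnd ℂ) c = c⁻¹ := by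
      field_simp at hcc ⊢
      linear_combination hcc
    rw [map_inv₀, this, inv_inv]
  have hψt : ψ t = ∑ i, (U : Matrix S S ℂ) t i * ψ i := by
    conv_lhs => rw [← heig]
    rfl
  rw [hψt, Finset.sum_eq_single s]
  · rw [hrow s, hconj]; simp
  · intro b _ hb; rw [hrow b]; simp [Pi.single_apply, hb]
  · simp

theorem stmt_14 {S : Type*} [Fintype S] [DecidableEq S] [Nonempty S]
    (𝒢 : Subgroup (Matrix.unitaryGroup S ℂ))
    (hmono : ∀ U ∈ 𝒢, ∀ s : S, ∃ (c : ℂ) (t : S),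
      (U : Matrix S S ℂ).mulVec (Pi.single s 1) = c • (Pi.single t 1 : S → ℂ))
    (ψ : S → ℂ) (hψ : ψ ≠ 0)
    (heig : ∀ U ∈ 𝒢, (U : Matrix S S ℂ).mulVec ψ = ψ)
    (huniq : ∀ φ : S → ℂ, (∀ U ∈ 𝒢, (U : Matrix S S ℂ).mulVec φ = φ) →
      ∃ c : ℂ, φ = c • ψ) :
    (∀ s t : S, ψ s ≠ 0 → ψ t ≠ 0 → ‖ψ s‖ = ‖ψ t‖) ∧
    (∀ s : S, ψ s ≠ 0 →
      {t : S | ψ t ≠ 0} =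
        {t : S | ∃ U ∈ 𝒢, ∃ c : ℂ, c ≠ 0 ∧
          (U : Matrix S S ℂ).mulVec (Pi.single s 1) = c • (Pi.single t 1 : S → ℂ)}) := by
  classical
  -- from a nonzero entry, the whole column
  have hcolE : ∀ U ∈ 𝒢, ∀ r i : S, (U : Matrix S S ℂ) r i ≠ 0 →
      (U : Matrix S S ℂ).mulVec (Pi.single i 1)
        = ((U : Matrix S S ℂ) r i) • (Pi.single r 1 : S → ℂ) := by
    intro U hU r i hri
    obtain ⟨c, t, hct⟩ := hmono U hU i
    have hent := col_entry (U : Matrix S S ℂ) i t c hct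
    have htr : t = r := by
      by_contra h
      apply hri
      rw [hent r, Pi.single_apply, if_neg (fun hh => h hh.symm)]
      ring
    rw [htr] at hct
    have hcv : (U : Matrix S S ℂ) r i = c := by
      have := congrFun hct r
      simpa using this
    rw [hcv]; exact hct
  set O : S → S → Prop := fun s t => ∃ U ∈ 𝒢, ∃ c : ℂ, c ≠ 0 ∧
      (U : Matrix S S ℂ).mulVec (Pi.single s 1) = c • (Pi.single t 1 : S → ℂ) with hO
  -- orbit transport along a nonzero entry
  have htrans : ∀ s : S, ∀ U ∈ 𝒢, ∀ r i : S, (U : Matrix S S ℂ) r i ≠ 0 →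
      (O s i ↔ O s r) := by
    intro s U hU r i hri
    have hcol := hcolE U hU r i hri
    constructor
    · rintro ⟨W, hW, d, hd, hWd⟩
      refine ⟨U * W, mul_mem hU hW, d * (U : Matrix S S ℂ) r i,
        mul_ne_zero hd hri, ?_⟩
      have : ((U * W : Matrix.unitaryGroup S ℂ) : Matrix S S ℂ)
          = (U : Matrix S S ℂ) * (W : Matrix S S ℂ) := rfl
      rw [this, ← Matrix.mulVec_mulVec, hWd, Matrix.mulVec_smul, hcol,
        smul_smul]
    · rintro ⟨W, hW, d, hd, hWd⟩
      have hUinv : ((U⁻¹ : Matrix.unitaryGroup S ℂ) : Matrix S S ℂ) * (U : Matrix S S ℂ) = 1 := by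
        have : ((U⁻¹ * U : Matrix.unitaryGroup S ℂ) : Matrix S S ℂ) = (1 : Matrix S S ℂ) := by
          rw [inv_mul_cancel]; rfl
        rw [← this]; rfl
      have hinvcol : ((U⁻¹ : Matrix.unitaryGroup S ℂ) : Matrix S S ℂ).mulVec (Pi.single r 1)
          = ((U : Matrix S S ℂ) r i)⁻¹ • (Pi.single i 1 : S → ℂ) := by
        have h1 : ((U⁻¹ : Matrix.unitaryGroup S ℂ) : Matrix S S ℂ).mulVec
            ((U : Matrix S S ℂ).mulVec (Pi.single i 1)) = Pi.single i 1 := by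
          rw [Matrix.mulVec_mulVec, hUinv, Matrix.one_mulVec]
        rw [hcol, Matrix.mulVec_smul] at h1
        calc ((U⁻¹ : Matrix.unitaryGroup S ℂ) : Matrix S S ℂ).mulVec (Pi.single r 1)
            = ((U : Matrix S S ℂ) r i)⁻¹ • (((U : Matrix S S ℂ) r i) •
              ((U⁻¹ : Matrix.unitaryGroup S ℂ) : Matrix S S ℂ).mulVec (Pi.single r 1)) := by
              rw [smul_smul, inv_mul_cancel₀ hri, one_smul]
          _ = _ := by rw [h1]
      refine ⟨U⁻¹ * W, mul_mem (inv_mem hU) hW, d * ((U : Matrix S S ℂ) r i)⁻¹,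
        mul_ne_zero hd (inv_ne_zero hri), ?_⟩
      have hc : ((U⁻¹ * W : Matrix.unitaryGroup S ℂ) : Matrix S S ℂ)
          = ((U⁻¹ : Matrix.unitaryGroup S ℂ) : Matrix S S ℂ) * (W : Matrix S S ℂ) := rfl
      rw [hc, ← Matrix.mulVec_mulVec, hWd, Matrix.mulVec_smul, hinvcol, smul_smul]
  -- part (b)
  have hb : ∀ s : S, ψ s ≠ 0 → {t : S | ψ t ≠ 0} = {t : S | O s t} := by
    intro s hs
    have hOs : O s s := ⟨1, one_mem 𝒢, 1, one_ne_zero, by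
      have : ((1 : Matrix.unitaryGroup S ℂ) : Matrix S S ℂ) = 1 := rfl
      rw [this, Matrix.one_mulVec, one_smul]⟩
    -- truncated ψ is a common eigenvector
    set φ : S → ℂ := fun t => if O s t then ψ t else 0 with hφdef
    have hφfix : ∀ U ∈ 𝒢, (U : Matrix S S ℂ).mulVec φ = φ := by
      intro U hU
      funext r
      have hsum : (U : Matrix S S ℂ).mulVec φ r = ∑ i, (U : Matrix S S ℂ) r i * φ i := rfl
      by_cases hr : O s r
      · have : ∑ i, (U : Matrix S S ℂ) r i * φ i = ∑ i, (U : Matrix S S ℂ) r i * ψ i := by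
          apply Finset.sum_congr rfl
          intro i _
          by_cases hri : (U : Matrix S S ℂ) r i = 0
          · rw [hri]; ring
          · have hi : O s i := (htrans s U hU r i hri).2 hr
            simp [hφdef, hi]
        rw [hsum, this]
        have := congrFun (heig U hU) r
        simp only [hφdef, hr, if_pos]
        exact this
      · rw [hsum]
        have : ∀ i ∈ Finset.univ, (U : Matrix S S ℂ) r i * φ i = 0 := by
          intro i _
          by_cases hri : (U : Matrix S S ℂ) r i = 0
          · rw [hri]; ring
          · have hi : ¬ O s i := fun h => hr ((htrans s U hU r i hri).1 h)
            simp [hφdef, hi]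
        rw [Finset.sum_eq_zero this]
        simp [hφdef, hr]
    obtain ⟨k, hk⟩ := huniq φ hφfix
    have hk1 : k = 1 := by
      have h1 : φ s = k * ψ s := by
        have := congrFun hk s
        simpa using this
      have h2 : φ s = ψ s := by simp [hφdef, hOs]
      have h3 := h1
      rw [h2] at h3
      exact (mul_right_cancel₀ hs (by rw [one_mul]; exact h3)).symm
    ext t
    simp only [Set.mem_setOf_eq]
    constructor
    · intro ht
      by_contra hOt
      have : φ t = 0 := by simp [hφdef, hOt]
      rw [hk, hk1] at this
      simp at this
      exact ht this
    · rintro ⟨U, hU, c, hc, hcol⟩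
      have := key2 U s t c hcol ψ (heig U hU)
      rw [this]
      exact mul_ne_zero hc hs
  refine ⟨?_, hb⟩
  intro s t hs ht
  have : t ∈ {t : S | O s t} := by rw [← hb s hs]; exact ht
  obtain ⟨U, hU, c, hc, hcol⟩ := this
  have h1 := key1 U s t c hcol
  have h2 := key2 U s t c hcol ψ (heig U hU)
  have habs : ‖c‖ = 1 := by
    have := congrArg (‖·‖) h1
    rw [norm_mul, norm_one, Complex.norm_conj] at this
    nlinarith [norm_nonneg c]
  rw [h2, norm_mul, habs, one_mul]
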